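/- Let u be a radially decreasing W^{1,p} solution of -Δ_p u = g(u) on the punctured unit ball (in radial coordinates) that is in addition twice continuously differentiable on (0,1). Then for every continuously differentiable η : ℝ → ℝ whose support is a compact subset of the open interval (0,1), one has ∫_0^1 r^{n-1} [ (p-1)|u'(r)|^{p-2} ((u'·η)'(r))^2 - g'(u(r)) (u'(r)·η(r))^2 ] dr = ∫_0^1 r^{n-1} |u'(r)|^p [ (p-1) η'(r)^2 - (n-1) η(r)^2 / r^2 ] dr. -/

import Mathlib

open MeasureTheory Set Real Filter

/-- The radial `W^{1,p}` norm of a radial function `u` with radial derivative `u'`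
on the unit ball of `ℝ^n`, written in radial coordinates. -/
noncomputable def radialNorm (n : ℕ) (p : ℝ) (u u' : ℝ → ℝ) : ℝ :=
  (∫ r in Ioc (0:ℝ) 1, r ^ ((n : ℝ) - 1) * (|u r| ^ p + |u' r| ^ p)) ^ (1 / p)

/-- `u : (0,1] → ℝ` (with radial derivative `u'`) is a radially decreasing `W^{1,p}`
solution of `-Δ_p u = g(u)` on the punctured unit ball, in radial coordinates:
`u` is `C^1` on `(0,1]` with derivative `u'`, `u' < 0` on `(0,1)`,
`r ↦ r^{n-1}|u'|^{p-2}u'` has derivative `-r^{n-1} g(u(r))` on `(0,1)`, and the radial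
`W^{1,p}` norm of `u` is finite. -/
def IsRadialSolution (n : ℕ) (p : ℝ) (g : ℝ → ℝ) (u u' : ℝ → ℝ) : Prop :=
  (∀ r ∈ Ioc (0:ℝ) 1, HasDerivWithinAt u (u' r) (Ioc (0:ℝ) 1) r) ∧
  ContinuousOn u' (Ioc (0:ℝ) 1) ∧
  (∀ r ∈ Ioo (0:ℝ) 1, u' r < 0) ∧
  (∀ r ∈ Ioo (0:ℝ) 1,
    HasDerivAt (fun s : ℝ => s ^ ((n : ℝ) - 1) * |u' s| ^ (p - 2) * u' s)
      (-(r ^ ((n : ℝ) - 1) * g (u r))) r) ∧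
  IntegrableOn (fun r : ℝ => r ^ ((n : ℝ) - 1) * (|u r| ^ p + |u' r| ^ p)) (Ioc (0:ℝ) 1)

/-- Semi-stability of a radial solution: the second variation of energy is nonnegative
for every `C^1` test function with compact support in `(0,1)`. -/
def IsSemiStable (n : ℕ) (p : ℝ) (g : ℝ → ℝ) (u u' : ℝ → ℝ) : Prop :=
  ∀ ξ : ℝ → ℝ, ContDiff ℝ 1 ξ → IsCompact (tsupport ξ) → tsupport ξ ⊆ Ioo (0:ℝ) 1 →
    0 ≤ ∫ r in Ioc (0:ℝ) 1,
        r ^ ((n : ℝ) - 1) *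
          ((p - 1) * |u' r| ^ (p - 2) * (deriv ξ r) ^ 2 - deriv g (u r) * (ξ r) ^ 2)

theorem stmt7 (n : ℕ) (hn : 1 ≤ n) (p : ℝ) (hp : 1 < p)
    (g u u' u'' : ℝ → ℝ) (hg : ContDiff ℝ 1 g)
    (hsol : IsRadialSolution n p g u u')
    (hu'' : ∀ r ∈ Ioo (0:ℝ) 1, HasDerivAt u' (u'' r) r)
    (hu''cont : ContinuousOn u'' (Ioo (0:ℝ) 1))
    (η : ℝ → ℝ) (hη : ContDiff ℝ 1 η) (hηc : IsCompact (tsupport η))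
    (hηs : tsupport η ⊆ Ioo (0:ℝ) 1) :
    ∫ r in Ioc (0:ℝ) 1, r ^ ((n : ℝ) - 1) *
        ((p - 1) * |u' r| ^ (p - 2) * (deriv (fun s : ℝ => u' s * η s) r) ^ 2
          - deriv g (u r) * (u' r * η r) ^ 2)
      = ∫ r in Ioc (0:ℝ) 1, r ^ ((n : ℝ) - 1) * |u' r| ^ p *
          ((p - 1) * (deriv η r) ^ 2 - ((n : ℝ) - 1) * (η r) ^ 2 / r ^ 2) := by
  obtain ⟨hud, hu'c, hu'neg, heq, -⟩ := hsol
  -- an interval [a,b] ⊆ (0,1) containing the support of η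
  obtain ⟨a, b, ha0, hab, hb1, hsupp⟩ :
      ∃ a b : ℝ, 0 < a ∧ a ≤ b ∧ b < 1 ∧ tsupport η ⊆ Icc a b := by
    rcases eq_empty_or_nonempty (tsupport η) with h | h
    · exact ⟨1/2, 1/2, by norm_num, le_rfl, by norm_num, by simp [h]⟩
    · exact ⟨sInf (tsupport η), sSup (tsupport η), (hηs (hηc.sInf_mem h)).1,
        csInf_le_csSup h hηc.bddBelow hηc.bddAbove, (hηs (hηc.sSup_mem h)).2,
        fun x hx => ⟨csInf_le hηc.bddBelow hx, le_csSup hηc.bddAbove hx⟩⟩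
  set c : ℝ := a / 2 with hcdef
  set d : ℝ := (b + 1) / 2 with hddef
  have hc0 : 0 < c := by simp only [hcdef]; linarith
  have hca : c < a := by simp only [hcdef]; linarith
  have hbd : b < d := by simp only [hddef]; linarith
  have hd1 : d < 1 := by simp only [hddef]; linarith
  have hcd : c < d := by linarith
  have hsub1 : Icc c d ⊆ Ioo (0:ℝ) 1 := fun x hx => ⟨lt_of_lt_of_le hc0 hx.1, lt_of_le_of_lt hx.2 hd1⟩
  have hsub2 : Icc c d ⊆ Ioc (0:ℝ) 1 := fun x hx => ⟨(hsub1 hx).1, (hsub1 hx).2.le⟩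
  -- vanishing outside [a, b]
  have hη0 : ∀ x ∉ Icc a b, η x = 0 := fun x hx =>
    image_eq_zero_of_notMem_tsupport (fun h => hx (hsupp h))
  have hopen : IsOpen (Icc a b)ᶜ := isClosed_Icc.isOpen_compl
  have hdη0 : ∀ x ∉ Icc a b, deriv η x = 0 := by
    intro x hx
    have hev : η =ᶠ[nhds x] fun _ => (0:ℝ) := by
      filter_upwards [hopen.mem_nhds hx] with y hy; exact hη0 y hy
    rw [hev.deriv_eq]; simp
  have hdue0 : ∀ x ∉ Icc a b, deriv (fun s : ℝ => u' s * η s) x = 0 := by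
    intro x hx
    have hev : (fun s : ℝ => u' s * η s) =ᶠ[nhds x] fun _ => (0:ℝ) := by
      filter_upwards [hopen.mem_nhds hx] with y hy; simp [hη0 y hy]
    rw [hev.deriv_eq]; simp
  -- transfer integrals over Ioc 0 1 to interval integrals over [c, d]
  have key : ∀ F : ℝ → ℝ, (∀ x ∉ Icc a b, F x = 0) →
      (∫ r in Ioc (0:ℝ) 1, F r) = ∫ r in c..d, F r := by
    intro F hF
    have hmem1 : ∀ x, x ∉ Ioc (0:ℝ) 1 → F x = 0 := fun x hx =>
      hF x (fun hm => hx ⟨lt_of_lt_of_le ha0 hm.1, le_trans hm.2 hb1.le⟩)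
    have hmem2 : ∀ x, x ∉ Ioc c d → F x = 0 := fun x hx =>
      hF x (fun hm => hx ⟨lt_of_lt_of_le hca hm.1, le_trans hm.2 hbd.le⟩)
    rw [setIntegral_eq_integral_of_forall_compl_eq_zero hmem1,
      ← setIntegral_eq_integral_of_forall_compl_eq_zero hmem2,
      intervalIntegral.integral_of_le hcd.le]
  have hf0 : ∀ x ∉ Icc a b, x ^ ((n : ℝ) - 1) *
        ((p - 1) * |u' x| ^ (p - 2) * (deriv (fun s : ℝ => u' s * η s) x) ^ 2
          - deriv g (u x) * (u' x * η x) ^ 2) = 0 := by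
    intro x hx; rw [hη0 x hx, hdue0 x hx]; ring
  have hh0 : ∀ x ∉ Icc a b, x ^ ((n : ℝ) - 1) * |u' x| ^ p *
        ((p - 1) * (deriv η x) ^ 2 - ((n : ℝ) - 1) * (η x) ^ 2 / x ^ 2) = 0 := by
    intro x hx; rw [hη0 x hx, hdη0 x hx]; ring
  rw [key _ hf0, key _ hh0]
  -- pointwise facts on (0,1)
  have hdue : ∀ x ∈ Ioo (0:ℝ) 1, deriv (fun s : ℝ => u' s * η s) x
      = u'' x * η x + u' x * deriv η x := by
    intro x hx
    exact ((hu'' x hx).mul (hη.differentiable one_ne_zero _).hasDerivAt).deriv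
  -- continuity of the two integrands on [c,d]
  have hposx : ∀ x ∈ Icc c d, (0:ℝ) < x := fun x hx => (hsub1 hx).1
  have cont_rpow : ∀ e : ℝ, ContinuousOn (fun r : ℝ => r ^ e) (Icc c d) :=
    fun e => ContinuousOn.rpow_const continuousOn_id (fun x hx => Or.inl (hposx x hx).ne')
  have cont_u' : ContinuousOn u' (Icc c d) := hu'c.mono hsub2
  have cont_absu' : ∀ e : ℝ, ContinuousOn (fun r => |u' r| ^ e) (Icc c d) := fun e =>
    ContinuousOn.rpow_const cont_u'.abs
      (fun x hx => Or.inl (abs_ne_zero.mpr (hu'neg x (hsub1 hx)).ne))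
  have cont_u0 : ContinuousOn u (Ioc (0:ℝ) 1) := fun x hx => (hud x hx).continuousWithinAt
  have cont_u : ContinuousOn u (Icc c d) := cont_u0.mono hsub2
  have cont_dgu : ContinuousOn (fun r => deriv g (u r)) (Icc c d) :=
    (hg.continuous_deriv le_rfl).comp_continuousOn cont_u
  have cont_η : ContinuousOn η (Icc c d) := hη.continuous.continuousOn
  have cont_dη : ContinuousOn (deriv η) (Icc c d) := (hη.continuous_deriv le_rfl).continuousOn
  have cont_due : ContinuousOn (deriv (fun s : ℝ => u' s * η s)) (Icc c d) :=
    ContinuousOn.congr (((hu''cont.mono hsub1).mul cont_η).add (cont_u'.mul cont_dη))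
      (fun x hx => hdue x (hsub1 hx))
  have hcont_f : ContinuousOn (fun x : ℝ => x ^ ((n : ℝ) - 1) *
        ((p - 1) * |u' x| ^ (p - 2) * (deriv (fun s : ℝ => u' s * η s) x) ^ 2
          - deriv g (u x) * (u' x * η x) ^ 2)) (Icc c d) :=
    (cont_rpow _).mul (((continuousOn_const.mul (cont_absu' _)).mul (cont_due.pow 2)).sub
      (cont_dgu.mul ((cont_u'.mul cont_η).pow 2)))
  have hcont_h : ContinuousOn (fun x : ℝ => x ^ ((n : ℝ) - 1) * |u' x| ^ p *
        ((p - 1) * (deriv η x) ^ 2 - ((n : ℝ) - 1) * (η x) ^ 2 / x ^ 2)) (Icc c d) :=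
    ((cont_rpow _).mul (cont_absu' _)).mul
      ((continuousOn_const.mul (cont_dη.pow 2)).sub
        ((continuousOn_const.mul (cont_η.pow 2)).div (continuousOn_id.pow 2)
          (fun x hx => pow_ne_zero _ (hposx x hx).ne')))
  have II_f := hcont_f.intervalIntegrable_of_Icc (μ := volume) hcd.le
  have II_h := hcont_h.intervalIntegrable_of_Icc (μ := volume) hcd.le
  -- the antiderivative
  set F : ℝ → ℝ := fun r => -(r ^ ((n : ℝ) - 1) * (g (u r) * (u' r * η r ^ 2)))
      - ((n : ℝ) - 1) * (r ^ ((n : ℝ) - 2) * ((-u' r) ^ p * η r ^ 2)) with hFdef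
  have hkey : ∀ x ∈ Icc c d, HasDerivAt F
      ((fun x : ℝ => x ^ ((n : ℝ) - 1) *
        ((p - 1) * |u' x| ^ (p - 2) * (deriv (fun s : ℝ => u' s * η s) x) ^ 2
          - deriv g (u x) * (u' x * η x) ^ 2)) x
       - (fun x : ℝ => x ^ ((n : ℝ) - 1) * |u' x| ^ p *
        ((p - 1) * (deriv η x) ^ 2 - ((n : ℝ) - 1) * (η x) ^ 2 / x ^ 2)) x) x := by
    intro x hx
    have hx0 : 0 < x := (hsub1 hx).1
    have hx1 : x < 1 := (hsub1 hx).2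
    have hu'x : u' x < 0 := hu'neg x ⟨hx0, hx1⟩
    have ht0 : 0 < -u' x := neg_pos.mpr hu'x
    have hux : HasDerivAt u (u' x) x :=
      (hud x ⟨hx0, hx1.le⟩).hasDerivAt (Ioc_mem_nhds hx0 hx1)
    have hgu : HasDerivAt (fun r => g (u r)) (deriv g (u x) * u' x) x :=
      ((hg.differentiable one_ne_zero _).hasDerivAt).comp x hux
    have hηx : HasDerivAt η (deriv η x) x := (hη.differentiable one_ne_zero _).hasDerivAt
    have hu2 : HasDerivAt u' (u'' x) x := hu'' x ⟨hx0, hx1⟩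
    have hT : HasDerivAt (fun s => -u' s) (-u'' x) x := hu2.neg
    have hr1 : HasDerivAt (fun r : ℝ => r ^ ((n:ℝ) - 1)) (((n:ℝ) - 1) * x ^ ((n:ℝ) - 2)) x := by
      simpa [show (n:ℝ) - 1 - 1 = (n:ℝ) - 2 by ring] using
        Real.hasDerivAt_rpow_const (x := x) (p := (n:ℝ) - 1) (Or.inl hx0.ne')
    have hr2 : HasDerivAt (fun r : ℝ => r ^ ((n:ℝ) - 2)) (((n:ℝ) - 2) * x ^ ((n:ℝ) - 3)) x := by
      simpa [show (n:ℝ) - 2 - 1 = (n:ℝ) - 3 by ring] using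
        Real.hasDerivAt_rpow_const (x := x) (p := (n:ℝ) - 2) (Or.inl hx0.ne')
    have hTp : HasDerivAt (fun s => (-u' s) ^ p) (-u'' x * p * (-u' x) ^ (p - 1)) x :=
      hT.rpow_const (Or.inl ht0.ne')
    have hTp1 : HasDerivAt (fun s => (-u' s) ^ (p - 1))
        (-u'' x * (p - 1) * (-u' x) ^ (p - 2)) x := by
      simpa [show p - 1 - 1 = p - 2 by ring] using hT.rpow_const (p := p - 1) (Or.inl ht0.ne')
    have hA1 : (-u' x) ^ (p - 1) = (-u' x) ^ (p - 2) * -u' x := by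
      rw [show p - 1 = p - 2 + 1 by ring, Real.rpow_add_one ht0.ne']
    have hA2 : (-u' x) ^ p = (-u' x) ^ (p - 2) * -u' x * -u' x := by
      conv_lhs => rw [show p = p - 2 + 1 + 1 by ring]
      rw [Real.rpow_add_one ht0.ne', Real.rpow_add_one ht0.ne']
    have hx12 : x ^ ((n:ℝ) - 1) = x ^ ((n:ℝ) - 2) * x := by
      rw [show (n:ℝ) - 1 = (n:ℝ) - 2 + 1 by ring, Real.rpow_add_one hx0.ne']
    have hx23 : x ^ ((n:ℝ) - 2) = x ^ ((n:ℝ) - 3) * x := by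
      rw [show (n:ℝ) - 2 = (n:ℝ) - 3 + 1 by ring, Real.rpow_add_one hx0.ne']
    -- the equation, rewritten using u' < 0
    have hW := heq x ⟨hx0, hx1⟩
    have hW2 : HasDerivAt (fun s : ℝ => s ^ ((n:ℝ) - 1) * -((-u' s) ^ (p - 1)))
        (((n:ℝ) - 1) * x ^ ((n:ℝ) - 2) * -((-u' x) ^ (p - 1))
          + x ^ ((n:ℝ) - 1) * -(-u'' x * (p - 1) * (-u' x) ^ (p - 2))) x :=
      hr1.mul hTp1.neg
    have hev : (fun s : ℝ => s ^ ((n : ℝ) - 1) * |u' s| ^ (p - 2) * u' s)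
        =ᶠ[nhds x] (fun s : ℝ => s ^ ((n:ℝ) - 1) * -((-u' s) ^ (p - 1))) := by
      filter_upwards [isOpen_Ioo.mem_nhds (⟨hx0, hx1⟩ : x ∈ Ioo (0:ℝ) 1)] with y hy
      have hy' : u' y < 0 := hu'neg y hy
      have hy0 : (-u' y) ≠ 0 := (neg_pos.mpr hy').ne'
      rw [abs_of_neg hy', show p - 1 = p - 2 + 1 by ring, Real.rpow_add_one hy0]
      ring
    have hW2' : HasDerivAt (fun s : ℝ => s ^ ((n : ℝ) - 1) * |u' s| ^ (p - 2) * u' s)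
        (((n:ℝ) - 1) * x ^ ((n:ℝ) - 2) * -((-u' x) ^ (p - 1))
          + x ^ ((n:ℝ) - 1) * -(-u'' x * (p - 1) * (-u' x) ^ (p - 2))) x :=
      hW2.congr_of_eventuallyEq hev
    have hR := hW.unique hW2'
    rw [hx12, hA1] at hR
    have hxn2 : (0:ℝ) < x ^ ((n:ℝ) - 2) := Real.rpow_pos_of_pos hx0 _
    have hkeyrel : g (u x) * x = ((n:ℝ) - 1) * ((-u' x) ^ (p - 2) * -u' x)
        - (p - 1) * (-u' x) ^ (p - 2) * u'' x * x := by
      have h2 : x ^ ((n:ℝ) - 2) * (g (u x) * x)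
          = x ^ ((n:ℝ) - 2) * (((n:ℝ) - 1) * ((-u' x) ^ (p - 2) * -u' x)
            - (p - 1) * (-u' x) ^ (p - 2) * u'' x * x) := by linear_combination -hR
      exact mul_left_cancel₀ hxn2.ne' h2
    have hg0 : g (u x) = (((n:ℝ) - 1) * ((-u' x) ^ (p - 2) * -u' x)
        - (p - 1) * (-u' x) ^ (p - 2) * u'' x * x) / x := by
      rw [eq_div_iff hx0.ne']; exact hkeyrel
    -- build the derivative of F
    have hηsq : HasDerivAt (fun s => η s ^ 2) (2 * η x ^ 1 * deriv η x) x := by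
      simpa using hηx.fun_pow 2
    have hpart1 : HasDerivAt (fun r => r ^ ((n:ℝ) - 1) * (g (u r) * (u' r * η r ^ 2)))
        (((n:ℝ) - 1) * x ^ ((n:ℝ) - 2) * (g (u x) * (u' x * η x ^ 2))
          + x ^ ((n:ℝ) - 1) * (deriv g (u x) * u' x * (u' x * η x ^ 2)
            + g (u x) * (u'' x * η x ^ 2 + u' x * (2 * η x ^ 1 * deriv η x)))) x :=
      hr1.mul (hgu.mul (hu2.mul hηsq))
    have hpart2 : HasDerivAt (fun r => r ^ ((n:ℝ) - 2) * ((-u' r) ^ p * η r ^ 2))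
        (((n:ℝ) - 2) * x ^ ((n:ℝ) - 3) * ((-u' x) ^ p * η x ^ 2)
          + x ^ ((n:ℝ) - 2) * (-u'' x * p * (-u' x) ^ (p - 1) * η x ^ 2
            + (-u' x) ^ p * (2 * η x ^ 1 * deriv η x))) x :=
      hr2.mul (hTp.mul hηsq)
    have hF : HasDerivAt F
        (-(((n:ℝ) - 1) * x ^ ((n:ℝ) - 2) * (g (u x) * (u' x * η x ^ 2))
          + x ^ ((n:ℝ) - 1) * (deriv g (u x) * u' x * (u' x * η x ^ 2)
            + g (u x) * (u'' x * η x ^ 2 + u' x * (2 * η x ^ 1 * deriv η x))))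
          - ((n:ℝ) - 1) * (((n:ℝ) - 2) * x ^ ((n:ℝ) - 3) * ((-u' x) ^ p * η x ^ 2)
            + x ^ ((n:ℝ) - 2) * (-u'' x * p * (-u' x) ^ (p - 1) * η x ^ 2
              + (-u' x) ^ p * (2 * η x ^ 1 * deriv η x)))) x :=
      hpart1.neg.sub (hpart2.const_mul _)
    convert hF using 1
    beta_reduce
    rw [hdue x ⟨hx0, hx1⟩, abs_of_neg hu'x, hg0, hA1, hA2, hx12, hx23]
    field_simp
    ring
  have hFTC := intervalIntegral.integral_eq_sub_of_hasDerivAt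
    (f := F) (by rw [uIcc_of_le hcd.le]; exact hkey) (II_f.sub II_h)
  have hcnot : c ∉ Icc a b := fun h => absurd h.1 (not_le.mpr hca)
  have hdnot : d ∉ Icc a b := fun h => absurd h.2 (not_le.mpr hbd)
  have hFc : F c = 0 := by simp [hFdef, hη0 c hcnot]
  have hFd : F d = 0 := by simp [hFdef, hη0 d hdnot]
  have hsubint := intervalIntegral.integral_sub II_f II_h
  rw [hFTC] at hsubint
  rw [hFc, hFd] at hsubint
  linarith [hsubint]
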